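/- For every bipartite graph G of maximum degree at least two, the readability of G is at least dt(G) + 1, where dt(G) is the distinctness of G. -/

import Mathlib

def OvAt {α : Type} (s t : List α) (k : ℕ) : Prop :=
  0 < k ∧ k ≤ s.length ∧ k ≤ t.length ∧ s.drop (s.length - k) = t.take k

def Overlaps {α : Type} (s t : List α) : Prop := ∃ k, OvAt s t k

noncomputable def ovMin {α : Type} (s t : List α) : ℕ := sInf {k | OvAt s t k}

def HasOLab {S T : Type} (E : S → T → Prop) (k : ℕ) : Prop :=
  ∃ (α : Type) (ℓS : S → List α) (ℓT : T → List α),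
    (∀ u, (ℓS u).length = k) ∧ (∀ v, (ℓT v).length = k) ∧
    ∀ u v, E u v ↔ Overlaps (ℓS u) (ℓT v)

noncomputable def readability {S T : Type} (E : S → T → Prop) : ℕ :=
  sInf {k | HasOLab E k}


namespace OLabCons

abbrev A2 : Type := ℕ ⊕ ℕ ⊕ Unit

def sig (y : ℕ) : A2 := Sum.inl y
def sep (y : ℕ) : A2 := Sum.inr (Sum.inl y)
def blank : A2 := Sum.inr (Sum.inr ())

noncomputable def subsetsList (y : ℕ) : List (Finset ℕ) := (Finset.range y).powerset.toList

lemma mem_subsetsList {B : Finset ℕ} {y : ℕ} : B ∈ subsetsList y ↔ B ⊆ Finset.range y := by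
  simp [subsetsList, Finset.mem_powerset]

/-- measure -/
def μ (A : Finset ℕ) : ℕ := if h : A.Nonempty then A.max' h + 1 else 0

lemma mu_le {B : Finset ℕ} {y : ℕ} (hB : B ⊆ Finset.range y) : μ B ≤ y := by
  unfold μ
  split
  · rename_i h
    have h1 := hB (B.max'_mem h)
    rw [Finset.mem_range] at h1
    omega
  · omega

lemma mu_eq {A : Finset ℕ} (h : A.Nonempty) : μ A = A.max' h + 1 := by
  unfold μ; rw [dif_pos h]

noncomputable def P (A : Finset ℕ) : List A2 :=
  if h : A.Nonempty then
    sig (A.max' h) ::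
      (((subsetsList (A.max' h)).take
          ((subsetsList (A.max' h)).idxOf (A.erase (A.max' h)) + 1)).attach.map
        (fun B => sep (A.max' h) :: P B.1)).flatten
  else []
termination_by μ A
decreasing_by
  have hBmem : B.1 ∈ subsetsList (A.max' h) := List.mem_of_mem_take B.2
  have h1 : μ B.1 ≤ A.max' h := mu_le (mem_subsetsList.mp hBmem)
  have h2 : μ A = A.max' h + 1 := mu_eq h
  omega

noncomputable def W (y : ℕ) : List A2 :=
  sig y :: ((subsetsList y).map (fun B => sep y :: P B)).flatten

lemma P_empty : P (∅ : Finset ℕ) = [] := by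
  rw [P.eq_1]
  simp

lemma P_eq (A : Finset ℕ) (h : A.Nonempty) :
    P A = sig (A.max' h) ::
      (((subsetsList (A.max' h)).take
          ((subsetsList (A.max' h)).idxOf (A.erase (A.max' h)) + 1)).map
        (fun B => sep (A.max' h) :: P B)).flatten := by
  rw [P.eq_1, dif_pos h]
  congr 1
  congr 1
  exact List.attach_map_val (f := fun B => sep (A.max' h) :: P B)

lemma W_head (y : ℕ) : ∃ l, W y = sig y :: l := ⟨_, rfl⟩

/-- char classification for P -/
lemma P_chars : ∀ n (A : Finset ℕ), μ A ≤ n → ∀ c ∈ P A,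
    ∃ z, z < μ A ∧ (c = sig z ∨ c = sep z) := by
  intro n
  induction n with
  | zero =>
    intro A hn c hc
    have hA : ¬ A.Nonempty := by
      intro h; rw [mu_eq h] at hn; omega
    rw [Finset.not_nonempty_iff_eq_empty] at hA
    subst hA
    rw [P_empty] at hc
    simp at hc
  | succ n ih =>
    intro A hn c hc
    by_cases hA : A.Nonempty
    · set y := A.max' hA with hy
      rw [P_eq A hA] at hc
      rw [mu_eq hA]
      rcases List.mem_cons.mp hc with h | h
      · exact ⟨y, by omega, Or.inl h⟩
      · obtain ⟨t, ht, hct⟩ := List.mem_flatten.mp h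
        obtain ⟨B, hB, rfl⟩ := List.mem_map.mp ht
        have hBy : B ⊆ Finset.range y := mem_subsetsList.mp (List.mem_of_mem_take hB)
        rcases List.mem_cons.mp hct with h2 | h2
        · exact ⟨y, by omega, Or.inr h2⟩
        · have hμB : μ B ≤ n := by
            have := mu_le hBy
            rw [mu_eq hA] at hn
            omega
          obtain ⟨z, hz, hzc⟩ := ih B hμB c h2
          have : μ B ≤ y := mu_le hBy
          exact ⟨z, by omega, hzc⟩
    · rw [Finset.not_nonempty_iff_eq_empty] at hA
      subst hA
      rw [P_empty] at hc
      simp at hc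

lemma P_chars' (A : Finset ℕ) {c : A2} (hc : c ∈ P A) :
    ∃ z, z < μ A ∧ (c = sig z ∨ c = sep z) :=
  P_chars (μ A) A le_rfl c hc

lemma W_chars {y : ℕ} {c : A2} (hc : c ∈ W y) :
    ∃ z, z ≤ y ∧ (c = sig z ∨ c = sep z) := by
  rw [W] at hc
  rcases List.mem_cons.mp hc with h | h
  · exact ⟨y, le_rfl, Or.inl h⟩
  · obtain ⟨t, ht, hct⟩ := List.mem_flatten.mp h
    obtain ⟨B, hB, rfl⟩ := List.mem_map.mp ht
    have hBy : B ⊆ Finset.range y := mem_subsetsList.mp hB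
    rcases List.mem_cons.mp hct with h2 | h2
    · exact ⟨y, le_rfl, Or.inr h2⟩
    · obtain ⟨z, hz, hzc⟩ := P_chars' B h2
      have := mu_le hBy
      exact ⟨z, by omega, hzc⟩

lemma blank_not_mem_P (A : Finset ℕ) : blank ∉ P A := by
  intro h
  obtain ⟨z, _, hc | hc⟩ := P_chars' A h <;> simp [blank, sig, sep] at hc

lemma sig_tail {A : Finset ℕ} (h : A.Nonempty) {z : ℕ} (hz : sig z ∈ (P A).tail) :
    z < A.max' h := by
  rw [P_eq A h] at hz
  simp only [List.tail_cons] at hz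
  obtain ⟨t, ht, hct⟩ := List.mem_flatten.mp hz
  obtain ⟨B, hB, rfl⟩ := List.mem_map.mp ht
  have hBy : B ⊆ Finset.range (A.max' h) := mem_subsetsList.mp (List.mem_of_mem_take hB)
  rcases List.mem_cons.mp hct with h2 | h2
  · simp [sig, sep] at h2
  · obtain ⟨z', hz', hc | hc⟩ := P_chars' B h2
    · have hzz : z = z' := by simpa [sig] using hc
      have := mu_le hBy
      omega
    · simp [sig, sep] at hc

lemma erase_mem_subsetsList {A : Finset ℕ} (h : A.Nonempty) :
    A.erase (A.max' h) ∈ subsetsList (A.max' h) := by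
  rw [mem_subsetsList]
  intro b hb
  rw [Finset.mem_erase] at hb
  rw [Finset.mem_range]
  have := A.le_max' b hb.2
  omega

lemma P_prefix {A : Finset ℕ} (h : A.Nonempty) : P A <+: W (A.max' h) := by
  rw [P_eq A h, W]
  refine ⟨(((subsetsList (A.max' h)).drop
      ((subsetsList (A.max' h)).idxOf (A.erase (A.max' h)) + 1)).map
        (fun B => sep (A.max' h) :: P B)).flatten, ?_⟩
  rw [List.cons_append, ← List.flatten_append, ← List.map_append, List.take_append_drop]

lemma P_split {A : Finset ℕ} (h : A.Nonempty) :
    ∃ l₁, P A = l₁ ++ (sep (A.max' h) :: P (A.erase (A.max' h))) := by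
  set y := A.max' h with hy
  set lst := subsetsList y with hlst
  set i := lst.idxOf (A.erase y) with hi
  have hmem : A.erase y ∈ lst := erase_mem_subsetsList h
  have hlt : i < lst.length := List.idxOf_lt_length_iff.mpr hmem
  have htake : lst.take (i + 1) = lst.take i ++ [A.erase y] := by
    have h1 := List.take_concat_get hlt
    rw [List.concat_eq_append] at h1
    rw [← h1]
    congr 1
    congr 1
    exact List.getElem_idxOf hlt
  refine ⟨sig y :: ((lst.take i).map (fun B => sep y :: P B)).flatten, ?_⟩
  rw [P_eq A h, ← hy, ← hlst, ← hi, htake, List.map_append, List.flatten_append]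
  simp

/-- generic suffix lemma -/
lemma sfx_append {β : Type} (l₁ l₂ : List β) (j : ℕ) (hj : j ≤ l₂.length) :
    (l₁ ++ l₂).drop ((l₁ ++ l₂).length - j) = l₂.drop (l₂.length - j) := by
  rw [List.length_append]
  have h1 : l₁.length + l₂.length - j = l₁.length + (l₂.length - j) := by omega
  rw [h1, List.drop_length_add_append]

lemma mem_drop_mono {β : Type} {l : List β} {d₁ d₂ : ℕ} (h : d₁ ≤ d₂) {x : β}
    (hx : x ∈ l.drop d₂) : x ∈ l.drop d₁ := by
  have : l.drop d₂ = (l.drop d₁).drop (d₂ - d₁) := by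
    rw [List.drop_drop]
    congr 1
    omega
  rw [this] at hx
  exact List.drop_subset _ _ hx

lemma trace_sub : ∀ n (A : Finset ℕ) (z j : ℕ), μ A ≤ n → 1 ≤ j →
    (P A).drop ((P A).length - j) = (W z).take j → z ∈ A := by
  intro n
  induction n with
  | zero =>
    intro A z j hn hj heq
    exfalso
    have hA : ¬ A.Nonempty := by intro h; rw [mu_eq h] at hn; omega
    rw [Finset.not_nonempty_iff_eq_empty] at hA
    subst hA
    rw [P_empty] at heq
    simp only [List.drop_nil] at heq
    obtain ⟨j', rfl⟩ : ∃ j', j = j' + 1 := ⟨j - 1, by omega⟩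
    rw [W, List.take_succ_cons] at heq
    exact List.cons_ne_nil _ _ heq.symm
  | succ n ih =>
    intro A z j hn hj heq
    by_cases hA : A.Nonempty
    swap
    · exfalso
      rw [Finset.not_nonempty_iff_eq_empty] at hA
      subst hA
      rw [P_empty] at heq
      simp only [List.drop_nil] at heq
      obtain ⟨j', rfl⟩ : ∃ j', j = j' + 1 := ⟨j - 1, by omega⟩
      rw [W, List.take_succ_cons] at heq
      exact List.cons_ne_nil _ _ heq.symm
    set y := A.max' hA with hy
    obtain ⟨j', rfl⟩ : ∃ j', j = j' + 1 := ⟨j - 1, by omega⟩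
    have hWtake : (W z).take (j' + 1) = sig z :: (((subsetsList z).map (fun B => sep z :: P B)).flatten).take j' := by
      rw [W, List.take_succ_cons]
    by_cases hcase : (P A).length ≤ j' + 1
    · -- full suffix
      have h0 : (P A).length - (j' + 1) = 0 := by omega
      rw [h0, List.drop_zero, hWtake, P_eq A hA] at heq
      have hyz : y = z := by
        have := (List.cons.injEq _ _ _ _).mp heq
        simpa [sig] using this.1
      rw [← hyz]
      exact hy ▸ A.max'_mem hA
    · push_neg at hcase
      have hzlt : z < y := by
        have hmem : sig z ∈ (P A).drop ((P A).length - (j' + 1)) := by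
          rw [heq, hWtake]; exact List.mem_cons_self
        have h1 : 1 ≤ (P A).length - (j' + 1) := by omega
        have htail : sig z ∈ (P A).tail := by
          rw [← List.drop_one]
          exact mem_drop_mono h1 hmem
        exact sig_tail hA htail
      obtain ⟨l₁, hsplit⟩ := P_split hA
      rw [← hy] at hsplit
      by_cases hc2 : j' + 1 ≤ (P (A.erase y)).length
      · have heq' : (P (A.erase y)).drop ((P (A.erase y)).length - (j' + 1)) = (W z).take (j' + 1) := by
          rw [← heq, hsplit]
          have h2 : (j' + 1) ≤ (sep y :: P (A.erase y)).length := by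
            simp only [List.length_cons]; omega
          rw [sfx_append l₁ _ _ h2]
          have h3 : (sep y :: P (A.erase y)).length - (j' + 1)
              = ((P (A.erase y)).length - (j' + 1)) + 1 := by
            simp only [List.length_cons]; omega
          rw [h3, List.drop_succ_cons]
        have hμ : μ (A.erase y) ≤ n := by
          have h4 : A.erase y ⊆ Finset.range y := by
            have := erase_mem_subsetsList hA
            rw [mem_subsetsList] at this
            exact this
          have := mu_le h4
          rw [mu_eq hA] at hn
          omega
        exact Finset.mem_of_mem_erase (ih (A.erase y) z (j' + 1) hμ hj heq')
      · exfalso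
        push_neg at hc2
        have hsep : sep y ∈ (P A).drop ((P A).length - (j' + 1)) := by
          have h5 : (sep y :: P (A.erase y)).length ≤ (sep y :: P (A.erase y)).length := le_rfl
          have h6 := sfx_append l₁ (sep y :: P (A.erase y)) (sep y :: P (A.erase y)).length le_rfl
          rw [← hsplit, Nat.sub_self, List.drop_zero] at h6
          have h7 : sep y ∈ (P A).drop ((P A).length - (sep y :: P (A.erase y)).length) := by
            rw [h6]; exact List.mem_cons_self
          refine mem_drop_mono ?_ h7
          have h8 : (sep y :: P (A.erase y)).length ≤ j' + 1 := by
            simp only [List.length_cons]; omega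
          omega
        rw [heq] at hsep
        have h9 : sep y ∈ W z := List.take_subset _ _ hsep
        obtain ⟨z', hz', hc | hc⟩ := W_chars h9
        · simp [sig, sep] at hc
        · have : y = z' := by simpa [sep] using hc
          omega

lemma trace_sup : ∀ n (A : Finset ℕ) (z : ℕ), μ A ≤ n → z ∈ A →
    ∃ j, 1 ≤ j ∧ j ≤ (P A).length ∧ j ≤ (W z).length ∧
      (P A).drop ((P A).length - j) = (W z).take j := by
  intro n
  induction n with
  | zero =>
    intro A z hn hz
    exfalso
    have hA : A.Nonempty := ⟨z, hz⟩
    rw [mu_eq hA] at hn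
    omega
  | succ n ih =>
    intro A z hn hz
    have hA : A.Nonempty := ⟨z, hz⟩
    by_cases hzy : z = A.max' hA
    · have hpre : P A <+: W z := by rw [hzy]; exact P_prefix hA
      have hlen : 1 ≤ (P A).length := by
        rw [P_eq A hA]
        simp
      refine ⟨(P A).length, hlen, le_rfl, hpre.length_le, ?_⟩
      rw [Nat.sub_self, List.drop_zero]
      exact (List.prefix_iff_eq_take.mp hpre)
    · have hz' : z ∈ A.erase (A.max' hA) := Finset.mem_erase.mpr ⟨hzy, hz⟩
      have hμ : μ (A.erase (A.max' hA)) ≤ n := by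
        have h4 : A.erase (A.max' hA) ⊆ Finset.range (A.max' hA) := by
          have := erase_mem_subsetsList hA
          rw [mem_subsetsList] at this
          exact this
        have := mu_le h4
        rw [mu_eq hA] at hn
        omega
      obtain ⟨j, hj1, hj2, hj3, heq⟩ := ih (A.erase (A.max' hA)) z hμ hz'
      obtain ⟨l₁, hsplit⟩ := P_split hA
      refine ⟨j, hj1, ?_, hj3, ?_⟩
      · rw [hsplit, List.length_append, List.length_cons]
        omega
      · rw [hsplit]
        have h2 : j ≤ (sep (A.max' hA) :: P (A.erase (A.max' hA))).length := by
          simp only [List.length_cons]; omega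
        rw [sfx_append l₁ _ _ h2]
        have h3 : (sep (A.max' hA) :: P (A.erase (A.max' hA))).length - j
            = ((P (A.erase (A.max' hA))).length - j) + 1 := by
          simp only [List.length_cons]; omega
        rw [h3, List.drop_succ_cons, heq]

end OLabCons

open OLabCons in
theorem exists_olab {S T : Type} [Fintype S] [Fintype T] (E : S → T → Prop) :
    ∃ k, HasOLab E k := by
  classical
  let e := Fintype.equivFin T
  let AU : S → Finset ℕ := fun u => (Finset.univ.filter (fun v => E u v)).image (fun v => (e v : ℕ))
  let k := (Finset.univ.sup (fun v : T => (W (e v : ℕ)).length)) ⊔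
      (Finset.univ.sup (fun u : S => (P (AU u)).length))
  have hkW : ∀ v : T, (W (e v : ℕ)).length ≤ k := by
    intro v
    have h1 : (W (e v : ℕ)).length ≤ Finset.univ.sup (fun v : T => (W (e v : ℕ)).length) :=
      Finset.le_sup (f := fun v : T => (W (e v : ℕ)).length) (Finset.mem_univ v)
    exact le_trans h1 le_sup_left
  have hkP : ∀ u : S, (P (AU u)).length ≤ k := by
    intro u
    have h1 : (P (AU u)).length ≤ Finset.univ.sup (fun u : S => (P (AU u)).length) :=
      Finset.le_sup (f := fun u : S => (P (AU u)).length) (Finset.mem_univ u)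
    exact le_trans h1 le_sup_right
  have hmemA : ∀ u v, E u v ↔ (e v : ℕ) ∈ AU u := by
    intro u v
    constructor
    · intro h
      exact Finset.mem_image.mpr ⟨v, Finset.mem_filter.mpr ⟨Finset.mem_univ v, h⟩, rfl⟩
    · intro h
      obtain ⟨v', hv', hvv⟩ := Finset.mem_image.mp h
      have : v' = v := e.injective (Fin.ext hvv)
      subst this
      exact (Finset.mem_filter.mp hv').2
  refine ⟨k, A2, fun u => List.replicate (k - (P (AU u)).length) blank ++ P (AU u),
      fun v => W (e v : ℕ) ++ List.replicate (k - (W (e v : ℕ)).length) blank, ?_, ?_, ?_⟩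
  · intro u
    have := hkP u
    simp only [List.length_append, List.length_replicate]
    omega
  · intro v
    have := hkW v
    simp only [List.length_append, List.length_replicate]
    omega
  · intro u v
    rw [hmemA u v]
    constructor
    · intro hz
      obtain ⟨j, hj1, hj2, hj3, heq⟩ := trace_sup (μ (AU u)) (AU u) (e v : ℕ) le_rfl hz
      refine ⟨j, hj1, ?_, ?_, ?_⟩
      · simp only [List.length_append, List.length_replicate]
        have := hkP u
        omega
      · simp only [List.length_append, List.length_replicate]
        have := hkW v
        omega
      · rw [sfx_append _ _ j hj2, heq, List.take_append_of_le_length hj3]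
    · rintro ⟨j, hj1, hj2, hj3, heq⟩
      dsimp only at hj2 hj3 heq
      have hklen : (List.replicate (k - (P (AU u)).length) blank ++ P (AU u)).length = k := by
        simp only [List.length_append, List.length_replicate]
        have := hkP u
        omega
      have hjk : j ≤ k := by rw [← hklen]; exact hj2
      -- step 1 : j ≤ |P (AU u)|
      have hjP : j ≤ (P (AU u)).length := by
        by_contra hgt
        push_neg at hgt
        have hhead := congrArg List.head? heq
        rw [List.head?_drop] at hhead
        have hlt : (List.replicate (k - (P (AU u)).length) blank ++ P (AU u)).length - j
            < (List.replicate (k - (P (AU u)).length) blank).length := by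
          rw [hklen, List.length_replicate]
          omega
        rw [List.getElem?_append, if_pos hlt] at hhead
        have hlt2 := hlt
        rw [List.length_replicate] at hlt2
        rw [List.getElem?_replicate, if_pos hlt2] at hhead
        -- RHS head
        obtain ⟨j', rfl⟩ : ∃ j', j = j' + 1 := ⟨j - 1, by omega⟩
        rw [W, List.cons_append, List.take_succ_cons] at hhead
        simp only [List.head?_cons] at hhead
        simp [blank, sig] at hhead
      -- step 2 : j ≤ |W (e v)|
      have hjW : j ≤ (W (e v : ℕ)).length := by
        by_contra hgt
        push_neg at hgt
        have hblank : blank ∈ (W (e v : ℕ) ++ List.replicate (k - (W (e v : ℕ)).length) blank).take j := by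
          have h1 : j = (W (e v : ℕ)).length + (j - (W (e v : ℕ)).length) := by omega
          rw [h1, List.take_append]
          refine List.mem_append_right _ ?_
          rw [List.take_replicate]
          refine List.mem_replicate.mpr ⟨?_, rfl⟩
          have := hkW v
          omega
        rw [← heq] at hblank
        have h2 : blank ∈ P (AU u) := by
          have h3 := hblank
          rw [sfx_append _ _ j hjP] at h3
          exact List.drop_subset _ _ h3
        exact blank_not_mem_P _ h2
      have heq' : (P (AU u)).drop ((P (AU u)).length - j) = (W (e v : ℕ)).take j := by
        rw [← sfx_append (List.replicate (k - (P (AU u)).length) blank) (P (AU u)) j hjP, heq,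
          List.take_append_of_le_length hjW]
      exact trace_sub (μ (AU u)) (AU u) (e v : ℕ) j le_rfl hj1 heq'

theorem key_bound {S T : Type} [Fintype S] [Fintype T] (E : S → T → Prop)
    (hdeg : (∃ u : S, 2 ≤ Nat.card {t // E u t}) ∨ (∃ v : T, 2 ≤ Nat.card {s // E s v}))
    (dt : ℕ)
    (hdt : dt = sInf {d |
      (∃ u v : S, u ≠ v ∧
        d = max (Nat.card {t // E u t ∧ ¬ E v t}) (Nat.card {t // E v t ∧ ¬ E u t})) ∨
      (∃ u v : T, u ≠ v ∧
        d = max (Nat.card {s // E s u ∧ ¬ E s v}) (Nat.card {s // E s v ∧ ¬ E s u}))})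
    (k : ℕ) (hk : HasOLab E k) : dt + 1 ≤ k := by
  classical
  obtain ⟨α, ℓS, ℓT, hS, hT, hE⟩ := hk
  set D : Set ℕ := {d |
      (∃ u v : S, u ≠ v ∧
        d = max (Nat.card {t // E u t ∧ ¬ E v t}) (Nat.card {t // E v t ∧ ¬ E u t})) ∨
      (∃ u v : T, u ≠ v ∧
        d = max (Nat.card {s // E s u ∧ ¬ E s v}) (Nat.card {s // E s v ∧ ¬ E s u}))} with hD
  -- the agreement set
  set Ag : Set ℕ := {j | j ≤ k ∧
      ((∃ a b : S, a ≠ b ∧ (ℓS a).drop (k - j) = (ℓS b).drop (k - j)) ∨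
       (∃ a b : T, a ≠ b ∧ (ℓT a).take j = (ℓT b).take j))} with hAg
  -- a distinct same-side pair exists
  have pair2 : ∀ (X : Type) [Finite X], 2 ≤ Nat.card X → ∃ a b : X, a ≠ b := by
    intro X _ h
    have := Finite.one_lt_card_iff_nontrivial.mp h
    exact exists_pair_ne X
  have h0 : 0 ∈ Ag := by
    constructor
    · exact Nat.zero_le k
    rcases hdeg with ⟨u, hu⟩ | ⟨v, hv⟩
    · obtain ⟨⟨a, ha⟩, ⟨b, hb⟩, hab⟩ := pair2 _ hu
      exact Or.inr ⟨a, b, fun h => hab (Subtype.ext h), by simp⟩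
    · obtain ⟨⟨a, ha⟩, ⟨b, hb⟩, hab⟩ := pair2 _ hv
      refine Or.inl ⟨a, b, fun h => hab (Subtype.ext h), ?_⟩
      have e : ∀ s : S, (ℓS s).drop (k - 0) = [] := by
        intro s
        rw [Nat.sub_zero, ← hS s, List.drop_length]
      rw [e a, e b]
  have hbdd : BddAbove Ag := ⟨k, fun j hj => hj.1⟩
  set M : ℕ := sSup Ag with hMdef
  have hMmem : M ∈ Ag := Nat.sSup_mem ⟨0, h0⟩ hbdd
  have hMk : M ≤ k := hMmem.1
  have hMmax : ∀ j ∈ Ag, j ≤ M := fun j hj => le_csSup hbdd hj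
  -- basic overlap facts
  have ovk : ∀ (s : S) (t : T) (j : ℕ), OvAt (ℓS s) (ℓT t) j → 1 ≤ j ∧ j ≤ k := by
    intro s t j hj
    exact ⟨hj.1, by rw [← hT t]; exact hj.2.2.1⟩
  -- agreement from two overlaps at the same length: S side
  have agS : ∀ (s s' : S) (t : T) (j : ℕ), OvAt (ℓS s) (ℓT t) j → OvAt (ℓS s') (ℓT t) j →
      (ℓS s).drop (k - j) = (ℓS s').drop (k - j) := by
    intro s s' t j h1 h2
    have e1 := h1.2.2.2
    have e2 := h2.2.2.2
    rw [hS s] at e1; rw [hS s'] at e2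
    rw [e1, e2]
  have agT : ∀ (s : S) (t t' : T) (j : ℕ), OvAt (ℓS s) (ℓT t) j → OvAt (ℓS s) (ℓT t') j →
      (ℓT t).take j = (ℓT t').take j := by
    intro s t t' j h1 h2
    rw [← h1.2.2.2, ← h2.2.2.2]
  -- transfer lemmas
  have trT : ∀ (s : S) (x y : T) (i : ℕ), i ≤ M → (ℓT x).take M = (ℓT y).take M →
      OvAt (ℓS s) (ℓT x) i → OvAt (ℓS s) (ℓT y) i := by
    intro s x y i hiM hag hov
    refine ⟨hov.1, hov.2.1, ?_, ?_⟩
    · rw [hT y]; exact le_trans hiM hMk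
    · have : (ℓT y).take i = (ℓT x).take i := by
        have h1 : (ℓT y).take i = ((ℓT y).take M).take i := by
          rw [List.take_take, min_eq_left hiM]
        have h2 : (ℓT x).take i = ((ℓT x).take M).take i := by
          rw [List.take_take, min_eq_left hiM]
        rw [h1, ← hag, ← h2]
      rw [this]; exact hov.2.2.2
  have trS : ∀ (x y : S) (t : T) (i : ℕ), i ≤ M → (ℓS x).drop (k - M) = (ℓS y).drop (k - M) →
      OvAt (ℓS x) (ℓT t) i → OvAt (ℓS y) (ℓT t) i := by
    intro x y t i hiM hag hov
    have hxlen : i ≤ k := by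
      have e := hov.2.1
      rw [hS x] at e
      exact e
    refine ⟨hov.1, ?_, hov.2.2.1, ?_⟩
    · rw [hS y]; exact hxlen
    · have hd : ∀ (l : List α), l.drop (k - i) = (l.drop (k - M)).drop (M - i) := by
        intro l
        rw [List.drop_drop]
        congr 1
        omega
      have e : (ℓS y).drop ((ℓS y).length - i) = (ℓS x).drop ((ℓS x).length - i) := by
        rw [hS y, hS x, hd (ℓS y), hd (ℓS x), hag]
      rw [e]; exact hov.2.2.2
  -- counting lemmas
  have cntT : ∀ (x y : T) (J : Finset ℕ),
      (∀ s : S, E s x → ¬ E s y → ∃ j ∈ J, OvAt (ℓS s) (ℓT x) j) →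
      (∀ s s' : S, s ≠ s' → ∀ j ∈ J, OvAt (ℓS s) (ℓT x) j → OvAt (ℓS s') (ℓT x) j → False) →
      Nat.card {s // E s x ∧ ¬ E s y} ≤ J.card := by
    intro x y J hex hinj
    have h1 : ∀ s : {s // E s x ∧ ¬ E s y}, ∃ j, j ∈ J ∧ OvAt (ℓS s.1) (ℓT x) j := by
      intro s
      obtain ⟨j, hj1, hj2⟩ := hex s.1 s.2.1 s.2.2
      exact ⟨j, hj1, hj2⟩
    choose f hf1 hf2 using h1
    have hfi : Function.Injective (fun s => (⟨f s, hf1 s⟩ : {j // j ∈ J})) := by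
      intro s s' h
      by_contra hne
      have hv : s.1 ≠ s'.1 := fun hh => hne (Subtype.ext hh)
      have hfe : f s = f s' := congrArg Subtype.val h
      exact hinj s.1 s'.1 hv (f s) (hf1 s) (hf2 s) (hfe ▸ hf2 s')
    calc Nat.card {s // E s x ∧ ¬ E s y} ≤ Nat.card {j // j ∈ J} :=
          Nat.card_le_card_of_injective _ hfi
      _ = J.card := Nat.card_eq_finsetCard J
  have cntS : ∀ (x y : S) (J : Finset ℕ),
      (∀ t : T, E x t → ¬ E y t → ∃ j ∈ J, OvAt (ℓS x) (ℓT t) j) →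
      (∀ t t' : T, t ≠ t' → ∀ j ∈ J, OvAt (ℓS x) (ℓT t) j → OvAt (ℓS x) (ℓT t') j → False) →
      Nat.card {t // E x t ∧ ¬ E y t} ≤ J.card := by
    intro x y J hex hinj
    have h1 : ∀ t : {t // E x t ∧ ¬ E y t}, ∃ j, j ∈ J ∧ OvAt (ℓS x) (ℓT t.1) j := by
      intro t
      obtain ⟨j, hj1, hj2⟩ := hex t.1 t.2.1 t.2.2
      exact ⟨j, hj1, hj2⟩
    choose f hf1 hf2 using h1
    have hfi : Function.Injective (fun t => (⟨f t, hf1 t⟩ : {j // j ∈ J})) := by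
      intro t t' h
      by_contra hne
      have hv : t.1 ≠ t'.1 := fun hh => hne (Subtype.ext hh)
      have hfe : f t = f t' := congrArg Subtype.val h
      exact hinj t.1 t'.1 hv (f t) (hf1 t) (hf2 t) (hfe ▸ hf2 t')
    calc Nat.card {t // E x t ∧ ¬ E y t} ≤ Nat.card {j // j ∈ J} :=
          Nat.card_le_card_of_injective _ hfi
      _ = J.card := Nat.card_eq_finsetCard J
  -- it suffices to find d ∈ D with d + 1 ≤ k
  have suffice : ∀ d ∈ D, d + 1 ≤ k → dt + 1 ≤ k := by
    intro d hd hdk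
    have : dt ≤ d := by rw [hdt]; exact Nat.sInf_le hd
    omega
  by_cases hM0 : 1 ≤ M
  · -- case A : use the pair attaining M
    rcases hMmem.2 with ⟨a, b, hab, hag⟩ | ⟨a, b, hab, hag⟩
    · -- S pair
      have count : ∀ (x y : S), (ℓS x).drop (k - M) = (ℓS y).drop (k - M) →
          Nat.card {t // E x t ∧ ¬ E y t} ≤ (Finset.Icc (M+1) k).card := by
        intro x y hxy
        apply cntS x y
        · intro t hxt hyt
          obtain ⟨j, hov⟩ := (hE x t).mp hxt
          obtain ⟨hj1, hjk⟩ := ovk _ _ _ hov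
          refine ⟨j, ?_, hov⟩
          rw [Finset.mem_Icc]
          refine ⟨?_, hjk⟩
          by_contra hjM
          push_neg at hjM
          exact hyt ((hE y t).mpr ⟨j, trS x y t j (by omega) hxy hov⟩)
        · intro t t' htt j hjJ h1 h2
          rw [Finset.mem_Icc] at hjJ
          have : j ∈ Ag := ⟨hjJ.2, Or.inr ⟨t, t', htt, agT _ _ _ _ h1 h2⟩⟩
          have := hMmax j this
          omega
      refine suffice _ (Or.inl ⟨a, b, hab, rfl⟩) ?_
      have c1 := count a b hag
      have c2 := count b a hag.symm
      rw [Nat.card_Icc] at c1 c2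
      omega
    · -- T pair
      have count : ∀ (x y : T), (ℓT x).take M = (ℓT y).take M →
          Nat.card {s // E s x ∧ ¬ E s y} ≤ (Finset.Icc (M+1) k).card := by
        intro x y hxy
        apply cntT x y
        · intro s hsx hsy
          obtain ⟨j, hov⟩ := (hE s x).mp hsx
          obtain ⟨hj1, hjk⟩ := ovk _ _ _ hov
          refine ⟨j, ?_, hov⟩
          rw [Finset.mem_Icc]
          refine ⟨?_, hjk⟩
          by_contra hjM
          push_neg at hjM
          exact hsy ((hE s y).mpr ⟨j, trT s x y j (by omega) hxy hov⟩)
        · intro s s' hss j hjJ h1 h2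
          rw [Finset.mem_Icc] at hjJ
          have : j ∈ Ag := ⟨hjJ.2, Or.inl ⟨s, s', hss, agS _ _ _ _ h1 h2⟩⟩
          have := hMmax j this
          omega
      refine suffice _ (Or.inr ⟨a, b, hab, rfl⟩) ?_
      have c1 := count a b hag
      have c2 := count b a hag.symm
      rw [Nat.card_Icc] at c1 c2
      omega
  · -- case B : M = 0
    have hM : M = 0 := by omega
    have noag : ∀ j ∈ Ag, j = 0 := by
      intro j hj; have := hMmax j hj; omega
    rcases hdeg with ⟨u, hu⟩ | ⟨v, hv⟩
    · -- u : S with two neighbours v₁ ≠ v₂ in T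
      obtain ⟨⟨v₁, hv₁⟩, ⟨v₂, hv₂⟩, hvv'⟩ := pair2 _ hu
      have hvv : v₁ ≠ v₂ := fun h => hvv' (Subtype.ext h)
      have count : ∀ (x y : T), E u x → E u y → x ≠ y →
          Nat.card {s // E s x ∧ ¬ E s y} ≤ k - 1 := by
        intro x y hux huy hxy
        obtain ⟨j₀, hov₀⟩ := (hE u x).mp hux
        obtain ⟨hj₀1, hj₀k⟩ := ovk _ _ _ hov₀
        have hj₀ : j₀ ∈ Finset.Icc 1 k := Finset.mem_Icc.mpr ⟨hj₀1, hj₀k⟩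
        have hle := cntT x y ((Finset.Icc 1 k).erase j₀) ?_ ?_
        · rw [Finset.card_erase_of_mem hj₀, Nat.card_Icc] at hle
          omega
        · intro s hsx hsy
          obtain ⟨j, hov⟩ := (hE s x).mp hsx
          obtain ⟨hj1, hjk⟩ := ovk _ _ _ hov
          refine ⟨j, ?_, hov⟩
          rw [Finset.mem_erase, Finset.mem_Icc]
          refine ⟨?_, hj1, hjk⟩
          intro hjj
          subst hjj
          have hsu : s ≠ u := by
            intro h; subst h; exact hsy huy
          have : j ∈ Ag := ⟨hjk, Or.inl ⟨s, u, hsu, agS _ _ _ _ hov hov₀⟩⟩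
          have := noag j this
          omega
        · intro s s' hss j hjJ h1 h2
          rw [Finset.mem_erase, Finset.mem_Icc] at hjJ
          have : j ∈ Ag := ⟨hjJ.2.2, Or.inl ⟨s, s', hss, agS _ _ _ _ h1 h2⟩⟩
          have := noag j this
          omega
      refine suffice _ (Or.inr ⟨v₁, v₂, hvv, rfl⟩) ?_
      have c1 := count v₁ v₂ hv₁ hv₂ hvv
      have c2 := count v₂ v₁ hv₂ hv₁ hvv.symm
      have hk1 : 1 ≤ k := by
        obtain ⟨j₀, hov₀⟩ := (hE u v₁).mp hv₁
        obtain ⟨h1, h2⟩ := ovk _ _ _ hov₀; omega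
      omega
    · -- v : T with two neighbours u₁ ≠ u₂ in S
      obtain ⟨⟨u₁, hu₁⟩, ⟨u₂, hu₂⟩, huu'⟩ := pair2 _ hv
      have huu : u₁ ≠ u₂ := fun h => huu' (Subtype.ext h)
      have count : ∀ (x y : S), E x v → E y v → x ≠ y →
          Nat.card {t // E x t ∧ ¬ E y t} ≤ k - 1 := by
        intro x y hxv hyv hxy
        obtain ⟨j₀, hov₀⟩ := (hE x v).mp hxv
        obtain ⟨hj₀1, hj₀k⟩ := ovk _ _ _ hov₀
        have hj₀ : j₀ ∈ Finset.Icc 1 k := Finset.mem_Icc.mpr ⟨hj₀1, hj₀k⟩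
        have hle := cntS x y ((Finset.Icc 1 k).erase j₀) ?_ ?_
        · rw [Finset.card_erase_of_mem hj₀, Nat.card_Icc] at hle
          omega
        · intro t hxt hyt
          obtain ⟨j, hov⟩ := (hE x t).mp hxt
          obtain ⟨hj1, hjk⟩ := ovk _ _ _ hov
          refine ⟨j, ?_, hov⟩
          rw [Finset.mem_erase, Finset.mem_Icc]
          refine ⟨?_, hj1, hjk⟩
          intro hjj
          subst hjj
          have htv : t ≠ v := by
            intro h; subst h; exact hyt hyv
          have : j ∈ Ag := ⟨hjk, Or.inr ⟨t, v, htv, agT _ _ _ _ hov hov₀⟩⟩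
          have := noag j this
          omega
        · intro t t' htt j hjJ h1 h2
          rw [Finset.mem_erase, Finset.mem_Icc] at hjJ
          have : j ∈ Ag := ⟨hjJ.2.2, Or.inr ⟨t, t', htt, agT _ _ _ _ h1 h2⟩⟩
          have := noag j this
          omega
      refine suffice _ (Or.inl ⟨u₁, u₂, huu, rfl⟩) ?_
      have c1 := count u₁ u₂ hu₁ hu₂ huu
      have c2 := count u₂ u₁ hu₂ hu₁ huu.symm
      have hk1 : 1 ≤ k := by
        obtain ⟨j₀, hov₀⟩ := (hE u₁ v).mp hu₁
        obtain ⟨h1, h2⟩ := ovk _ _ _ hov₀; omega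
      omega

theorem readability_ge_distinctness_succ
    {S T : Type} [Fintype S] [Fintype T] (E : S → T → Prop)
    (hdeg : (∃ u : S, 2 ≤ Nat.card {t // E u t}) ∨ (∃ v : T, 2 ≤ Nat.card {s // E s v}))
    (dt : ℕ)
    (hdt : dt = sInf {d |
      (∃ u v : S, u ≠ v ∧
        d = max (Nat.card {t // E u t ∧ ¬ E v t}) (Nat.card {t // E v t ∧ ¬ E u t})) ∨
      (∃ u v : T, u ≠ v ∧
        d = max (Nat.card {s // E s u ∧ ¬ E s v}) (Nat.card {s // E s v ∧ ¬ E s u}))}) :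
    dt + 1 ≤ readability E := by
  have hne : {k | HasOLab E k}.Nonempty := exists_olab E
  have hmem : HasOLab E (readability E) := Nat.sInf_mem hne
  exact key_bound E hdeg dt hdt _ hmem
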